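/- arXiv:2412.16180 — 3 statements merged into one kernel-verified Lean document; each statement's English description precedes it below -/
import Mathlib

section
/- Let X ⊆ ℝ^n, X̂ ⊆ X, let S̃ : X × X̂ → ℝ≥0, α̃ ∈ K∞, σ̃ ∈ (0,1), ρ̃_u ∈ K∞ ∪ {0}, ε̃ ≥ 0, and suppose α̃(‖x − x̂‖) ≤ S̃(x, x̂) for all x ∈ X, x̂ ∈ X̂. Let x : ℕ → X and x̂ : ℕ → X̂ be sequences and u_max ≥ 0 a constant such that for every k ∈ ℕ, S̃(x(k+1), x̂(k+1)) ≤ max{ σ̃·S̃(x(k), x̂(k)), ρ̃_u(u_max), ε̃ }. Then for every k ∈ ℕ, ‖x(k) − x̂(k)‖ ≤ α̃⁻¹( max{ σ̃ᵏ·S̃(x(0), x̂(0)), ρ̃_u(u_max), ε̃ } ); in particular the distance between the two runs is uniformly bounded by α̃⁻¹( max{ S̃(x(0), x̂(0)), ρ̃_u(u_max), ε̃ } ). -/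
open scoped NNReal

/-- A class `K∞` function: continuous, strictly increasing, zero at zero, and
unbounded (tending to infinity).  Such a function is a bijection of `ℝ≥0`, and its
inverse is realized below by `Function.invFun`. -/
def IsKInfty (α : ℝ≥0 → ℝ≥0) : Prop :=
  Continuous α ∧ StrictMono α ∧ α 0 = 0 ∧ Filter.Tendsto α Filter.atTop Filter.atTop

lemma IsKInfty.surj {α : ℝ≥0 → ℝ≥0} (h : IsKInfty α) : Function.Surjective α := by
  obtain ⟨hc, hm, h0, ht⟩ := h
  intro y
  obtain ⟨R, hR⟩ := (Filter.tendsto_atTop.1 ht y).exists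
  have : y ∈ Set.Icc (α 0) (α R) := ⟨by rw [h0]; exact (zero_le : 0 ≤ y), hR⟩
  obtain ⟨r, _, hr⟩ := intermediate_value_Icc (zero_le : 0 ≤ R) hc.continuousOn this
  exact ⟨r, hr⟩

lemma IsKInfty.le_invFun {α : ℝ≥0 → ℝ≥0} (h : IsKInfty α) {a y : ℝ≥0}
    (hay : α a ≤ y) : a ≤ Function.invFun α y := by
  obtain ⟨r, hr⟩ := h.surj y
  have hinv : Function.invFun α y = r := by
    rw [← hr, Function.leftInverse_invFun h.2.1.injective]
  rw [hinv]
  exact h.2.1.le_iff_le.1 (hr ▸ hay)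

/-- uniform distance bound between matched runs.  Suppose
`α̃(‖x − x̂‖) ≤ S̃(x,x̂)` on `X × X̂` with `α̃ ∈ K∞`, and the runs satisfy
`S̃(x(k+1),x̂(k+1)) ≤ max {σ̃·S̃(x(k),x̂(k)), ρ̃_u(u_max), ε̃}`.  Then
`‖x(k) − x̂(k)‖ ≤ α̃⁻¹(max {σ̃ᵏ·S̃(x(0),x̂(0)), ρ̃_u(u_max), ε̃})` for every `k`;
in particular the distance is uniformly bounded by
`α̃⁻¹(max {S̃(x(0),x̂(0)), ρ̃_u(u_max), ε̃})`. -/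
theorem stmt_5 {n : ℕ} (X Xh : Set (Fin n → ℝ)) (hXh : Xh ⊆ X)
    (St : (Fin n → ℝ) → (Fin n → ℝ) → ℝ≥0)
    (αt : ℝ≥0 → ℝ≥0) (hαt : IsKInfty αt)
    (σt : ℝ≥0) (hσt0 : 0 < σt) (hσt1 : σt < 1)
    (ρut : ℝ≥0 → ℝ≥0) (hρut : IsKInfty ρut ∨ ρut = 0)
    (εt : ℝ≥0)
    (hlow : ∀ x ∈ X, ∀ xh ∈ Xh, αt ‖x - xh‖₊ ≤ St x xh)
    (x xh : ℕ → Fin n → ℝ) (hx : ∀ k, x k ∈ X) (hxh : ∀ k, xh k ∈ Xh)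
    (umax : ℝ≥0)
    (hrec : ∀ k : ℕ,
      St (x (k + 1)) (xh (k + 1)) ≤ max (max (σt * St (x k) (xh k)) (ρut umax)) εt) :
    (∀ k : ℕ, ‖x k - xh k‖₊ ≤
        Function.invFun αt (max (max (σt ^ k * St (x 0) (xh 0)) (ρut umax)) εt)) ∧
    (∀ k : ℕ, ‖x k - xh k‖₊ ≤
        Function.invFun αt (max (max (St (x 0) (xh 0)) (ρut umax)) εt)) := by
  have hSt : ∀ k : ℕ, St (x k) (xh k) ≤
      max (max (σt ^ k * St (x 0) (xh 0)) (ρut umax)) εt := by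
    intro k
    induction k with
    | zero => simp
    | succ k ih =>
      refine (hrec k).trans ?_
      have h1 : σt * St (x k) (xh k) ≤
          max (max (σt ^ (k + 1) * St (x 0) (xh 0)) (ρut umax)) εt := by
        calc σt * St (x k) (xh k)
            ≤ σt * (max (max (σt ^ k * St (x 0) (xh 0)) (ρut umax)) εt) :=
              mul_le_mul_right ih _
          _ = max (max (σt ^ (k + 1) * St (x 0) (xh 0)) (σt * ρut umax)) (σt * εt) := by
              rw [mul_max_of_nonneg _ _ (zero_le : 0 ≤ σt), mul_max_of_nonneg _ _ (zero_le : 0 ≤ σt),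
                ← mul_assoc, ← pow_succ']
          _ ≤ max (max (σt ^ (k + 1) * St (x 0) (xh 0)) (ρut umax)) εt := by
              gcongr <;>
                exact mul_le_of_le_one_left zero_le hσt1.le
      exact max_le (max_le h1 (le_max_of_le_left (le_max_right _ _))) (le_max_right _ _)
  have key : ∀ k : ℕ, αt ‖x k - xh k‖₊ ≤
      max (max (σt ^ k * St (x 0) (xh 0)) (ρut umax)) εt :=
    fun k => (hlow _ (hx k) _ (hxh k)).trans (hSt k)
  refine ⟨fun k => hαt.le_invFun (key k), fun k => hαt.le_invFun ((key k).trans ?_)⟩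
  gcongr
  exact mul_le_of_le_one_left zero_le (pow_le_one' hσt1.le k)
end

section
/- Let τ > 0, κ_c ≤ 0, 0 < κ_d < 1, and integers 1 ≤ z̲ ≤ z̄ with ln(κ_d) − κ_c·τ·z̄ < 0. Then there exist δ > z̄ and σ ∈ (0,1) such that (i) e^{−κ_c τ} · κ_d^{1/δ} ≤ σ, and (ii) κ_d^{1 − c/δ} ≤ σ for every integer c with z̲ ≤ c ≤ z̄. -/
lemma aux7 (τ κc κd : ℝ) (hκd0 : 0 < κd) (hκd1 : κd < 1)
    (zl zu : ℕ) (δ : ℝ) (hδ : (zu : ℝ) < δ) (hδ0 : 0 < δ)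
    (hkey : Real.log κd < κc * τ * δ) :
    ∃ δ' σ : ℝ, (zu : ℝ) < δ' ∧ σ ∈ Set.Ioo (0 : ℝ) 1 ∧
      Real.exp (-(κc * τ)) * κd ^ ((1 : ℝ) / δ') ≤ σ ∧
      ∀ c : ℕ, zl ≤ c → c ≤ zu → κd ^ (1 - (c : ℝ) / δ') ≤ σ := by
  set s1 := Real.exp (-(κc * τ)) * κd ^ ((1 : ℝ) / δ) with hs1
  set s2 := κd ^ (1 - (zu : ℝ) / δ) with hs2
  have h1pos : 0 < s1 := mul_pos (Real.exp_pos _) (Real.rpow_pos_of_pos hκd0 _)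
  have h1lt : s1 < 1 := by
    have he : s1 = Real.exp (-(κc * τ) + (1 / δ) * Real.log κd) := by
      rw [hs1, Real.rpow_def_of_pos hκd0, Real.exp_add]; ring_nf
    rw [he, Real.exp_lt_one_iff]
    have hdd : Real.log κd / δ < κc * τ := by
      rw [div_lt_iff₀ hδ0]; linarith
    have hd : (1 / δ) * Real.log κd = Real.log κd / δ := by ring
    linarith [hd ▸ hdd]
  have h2lt : s2 < 1 := by
    apply Real.rpow_lt_one hκd0.le hκd1
    have : (zu : ℝ) / δ < 1 := (div_lt_one hδ0).2 hδ
    linarith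
  refine ⟨δ, max s1 s2, hδ, ⟨lt_max_of_lt_left h1pos, max_lt h1lt h2lt⟩,
    le_max_left _ _, fun c _ hc2 => ?_⟩
  refine le_trans ?_ (le_max_right s1 s2)
  apply Real.rpow_le_rpow_of_exponent_ge hκd0 hκd1.le
  have hcz : (c : ℝ) ≤ (zu : ℝ) := by exact_mod_cast hc2
  have : (c : ℝ) / δ ≤ (zu : ℝ) / δ := by gcongr
  linarith

/-- dwell-time arithmetic for the case `κ_d < 1`, `κ_c ≤ 0`.
If `τ > 0`, `κ_c ≤ 0`, `0 < κ_d < 1`, `1 ≤ z̲ ≤ z̄` and `ln(κ_d) − κ_c·τ·z̄ < 0`, then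
there exist `δ > z̄` and `σ ∈ (0,1)` such that `e^{−κ_c τ} · κ_d^{1/δ} ≤ σ` and
`κ_d^{1 − c/δ} ≤ σ` for every integer `z̲ ≤ c ≤ z̄` (real powers). -/
theorem stmt_7 (τ κc κd : ℝ) (hτ : 0 < τ) (hκc : κc ≤ 0) (hκd0 : 0 < κd) (hκd1 : κd < 1)
    (zl zu : ℕ) (hzl : 1 ≤ zl) (hzz : zl ≤ zu)
    (hdwell : Real.log κd - κc * τ * (zu : ℝ) < 0) :
    ∃ δ σ : ℝ, (zu : ℝ) < δ ∧ σ ∈ Set.Ioo (0 : ℝ) 1 ∧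
      Real.exp (-(κc * τ)) * κd ^ ((1 : ℝ) / δ) ≤ σ ∧
      ∀ c : ℕ, zl ≤ c → c ≤ zu → κd ^ (1 - (c : ℝ) / δ) ≤ σ := by
  have hA0 : κc * τ ≤ 0 := mul_nonpos_of_nonpos_of_nonneg hκc hτ.le
  have hL : Real.log κd < κc * τ * zu := by linarith
  have hzu0 : (0 : ℝ) ≤ (zu : ℝ) := Nat.cast_nonneg _
  rcases eq_or_lt_of_le hA0 with hAeq | hAlt
  · refine aux7 τ κc κd hκd0 hκd1 zl zu ((zu : ℝ) + 1) (by linarith) (by linarith) ?_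
    have h1 : κc * τ * ((zu : ℝ) + 1) = 0 := by rw [hAeq]; ring
    have h2 : κc * τ * (zu : ℝ) = 0 := by rw [hAeq]; ring
    rw [h1]; rw [h2] at hL; exact hL
  · set ε := (κc * τ * zu - Real.log κd) / (-2 * (κc * τ)) with hε
    have hεpos : 0 < ε := div_pos (by linarith) (by linarith)
    refine aux7 τ κc κd hκd0 hκd1 zl zu ((zu : ℝ) + ε) (by linarith) (by linarith) ?_
    have hAne : κc * τ ≠ 0 := ne_of_lt hAlt
    have hme : κc * τ * ε = -(κc * τ * zu - Real.log κd) / 2 := by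
      rw [hε, mul_div_assoc', div_eq_div_iff (by intro h; linarith) (by norm_num)]; ring
    have expand : κc * τ * ((zu : ℝ) + ε) = κc * τ * zu + κc * τ * ε := by ring
    rw [expand, hme]; linarith
end

section
/- Let τ > 0, κ_c ∈ ℝ, let D_c be a symmetric (q+n)×(q+n) matrix, ρ_{u_c} ∈ K∞, and let V : ℝ^n × ℝ^n → ℝ≥0 be continuously differentiable and satisfy: for all x, x̂ ∈ ℝ^n, ω, ω̂ ∈ ℝ^q, u, û ∈ ℝ^m, ∂V/∂x(x,x̂)·f(x,ω,u) + ∂V/∂x̂(x,x̂)·f(x̂,ω̂,û) ≤ −κ_c·V(x,x̂) + [ω−ω̂; x−x̂]ᵀ D_c [ω−ω̂; x−x̂] + ρ_{u_c}(‖u−û‖). Let ξ, ξ̂ : [0,τ] → ℝ^n be continuous curves, ω : [0,τ] → ℝ^q, and ω̂ ∈ ℝ^q, u, û ∈ ℝ^m constants, such that ξ has derivative f(ξ(t), ω(t), u) and ξ̂ has derivative f(ξ̂(t), ω̂, û) at every t ∈ [0,τ]. Suppose there exists R ≥ 0 such that [ω(t)−ω̂; ξ(t)−ξ̂(t)]ᵀ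 D_c [ω(t)−ω̂; ξ(t)−ξ̂(t)] + ρ_{u_c}(‖u−û‖) ≤ R for all t ∈ [0,τ]. Then V(ξ(τ), ξ̂(τ)) ≤ e^{−κ_c τ}·V(ξ(0), ξ̂(0)) + R·∫₀^τ e^{−κ_c (τ−s)} ds. -/
open scoped NNReal
open Matrix

/-- Grönwall-type one-sampling-period estimate along pairs of flow
trajectories of `ẋ = f(x,ω,u)`.  If the C¹ function `V ≥ 0` satisfies the
dissipativity-type decrease condition and the quadratic supply term is bounded by `R`
along the two trajectories on `[0,τ]`, then
`V(ξ(τ),ξ̂(τ)) ≤ e^{−κ_c τ} V(ξ(0),ξ̂(0)) + R ∫₀^τ e^{−κ_c (τ−s)} ds`. -/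
theorem stmt_8 {n q m : ℕ} (τ : ℝ) (hτ : 0 < τ) (κc : ℝ)
    (Dc : Matrix (Fin q ⊕ Fin n) (Fin q ⊕ Fin n) ℝ) (hDc : Dc.IsSymm)
    (ρuc : ℝ≥0 → ℝ≥0) (hρuc : IsKInfty ρuc)
    (f : (Fin n → ℝ) → (Fin q → ℝ) → (Fin m → ℝ) → (Fin n → ℝ))
    (V : (Fin n → ℝ) × (Fin n → ℝ) → ℝ)
    (hV0 : ∀ p, 0 ≤ V p) (hV1 : ContDiff ℝ 1 V)
    (hdiss : ∀ (x xh : Fin n → ℝ) (ω ωh : Fin q → ℝ) (u uh : Fin m → ℝ),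
      fderiv ℝ V (x, xh) (f x ω u, f xh ωh uh) ≤
        -κc * V (x, xh)
        + Sum.elim (ω - ωh) (x - xh) ⬝ᵥ Dc.mulVec (Sum.elim (ω - ωh) (x - xh))
        + (ρuc ‖u - uh‖₊ : ℝ))
    (ξ ξh : ℝ → Fin n → ℝ) (ω : ℝ → Fin q → ℝ) (ωh : Fin q → ℝ) (u uh : Fin m → ℝ)
    (hξc : ContinuousOn ξ (Set.Icc 0 τ)) (hξhc : ContinuousOn ξh (Set.Icc 0 τ))
    (hξ : ∀ t ∈ Set.Icc (0 : ℝ) τ, HasDerivAt ξ (f (ξ t) (ω t) u) t)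
    (hξh : ∀ t ∈ Set.Icc (0 : ℝ) τ, HasDerivAt ξh (f (ξh t) ωh uh) t)
    (R : ℝ) (hR : 0 ≤ R)
    (hquad : ∀ t ∈ Set.Icc (0 : ℝ) τ,
      Sum.elim (ω t - ωh) (ξ t - ξh t) ⬝ᵥ Dc.mulVec (Sum.elim (ω t - ωh) (ξ t - ξh t))
        + (ρuc ‖u - uh‖₊ : ℝ) ≤ R) :
    V (ξ τ, ξh τ) ≤ Real.exp (-κc * τ) * V (ξ 0, ξh 0)
      + R * ∫ s in (0 : ℝ)..τ, Real.exp (-κc * (τ - s)) := by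

  -- abbreviations
  set g : ℝ → ℝ := fun t => V (ξ t, ξh t) with hg_def
  -- derivative of g on [0,τ]
  have hVdiff : Differentiable ℝ V := hV1.differentiable one_ne_zero
  have hg : ∀ t ∈ Set.Icc (0 : ℝ) τ,
      HasDerivAt g (fderiv ℝ V (ξ t, ξh t) (f (ξ t) (ω t) u, f (ξh t) ωh uh)) t := by
    intro t ht
    exact (hVdiff (ξ t, ξh t)).hasFDerivAt.comp_hasDerivAt t ((hξ t ht).prodMk (hξh t ht))
  -- exponential helper
  have hexp : ∀ t : ℝ, HasDerivAt (fun s => Real.exp (κc * s)) (κc * Real.exp (κc * t)) t := by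
    intro t
    have := ((hasDerivAt_id t).const_mul κc).exp
    simpa [mul_comm] using this
  -- φ t = e^{κc t} g t
  set φ : ℝ → ℝ := fun t => Real.exp (κc * t) * g t with hφ_def
  have hφ : ∀ t ∈ Set.Icc (0 : ℝ) τ,
      HasDerivAt φ (κc * Real.exp (κc * t) * g t
        + Real.exp (κc * t) * fderiv ℝ V (ξ t, ξh t) (f (ξ t) (ω t) u, f (ξh t) ωh uh)) t := by
    intro t ht
    exact (hexp t).mul (hg t ht)
  -- F t = ∫₀^t R e^{κc s} ds
  set F : ℝ → ℝ := fun t => ∫ s in (0 : ℝ)..t, R * Real.exp (κc * s) with hF_def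
  have hcont : Continuous fun s : ℝ => R * Real.exp (κc * s) :=
    continuous_const.mul (Real.continuous_exp.comp (continuous_const.mul continuous_id))
  have hF : ∀ t : ℝ, HasDerivAt F (R * Real.exp (κc * t)) t := by
    intro t
    exact intervalIntegral.integral_hasDerivAt_right
      (hcont.intervalIntegrable 0 t)
      (hcont.stronglyMeasurableAtFilter _ _)
      hcont.continuousAt
  -- ψ t = F t + φ 0 - φ t is monotone on [0,τ]
  set ψ : ℝ → ℝ := fun t => F t + φ 0 - φ t with hψ_def
  have hψderiv : ∀ t ∈ Set.Icc (0 : ℝ) τ,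
      HasDerivAt ψ (R * Real.exp (κc * t)
        - (κc * Real.exp (κc * t) * g t
          + Real.exp (κc * t) * fderiv ℝ V (ξ t, ξh t) (f (ξ t) (ω t) u, f (ξh t) ωh uh))) t := by
    intro t ht
    exact ((hF t).add_const (φ 0)).sub (hφ t ht)
  have hψnonneg : ∀ t ∈ Set.Icc (0 : ℝ) τ,
      0 ≤ R * Real.exp (κc * t)
        - (κc * Real.exp (κc * t) * g t
          + Real.exp (κc * t) * fderiv ℝ V (ξ t, ξh t) (f (ξ t) (ω t) u, f (ξh t) ωh uh)) := by
    intro t ht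
    have h1 := hdiss (ξ t) (ξh t) (ω t) ωh u uh
    have h2 := hquad t ht
    have hpos : (0 : ℝ) < Real.exp (κc * t) := Real.exp_pos _
    have key : fderiv ℝ V (ξ t, ξh t) (f (ξ t) (ω t) u, f (ξh t) ωh uh)
        ≤ -κc * g t + R := by
      calc fderiv ℝ V (ξ t, ξh t) (f (ξ t) (ω t) u, f (ξh t) ωh uh)
          ≤ -κc * V (ξ t, ξh t)
            + Sum.elim (ω t - ωh) (ξ t - ξh t) ⬝ᵥ Dc.mulVec (Sum.elim (ω t - ωh) (ξ t - ξh t))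
            + (ρuc ‖u - uh‖₊ : ℝ) := h1
        _ ≤ -κc * g t + R := by rw [hg_def]; linarith
    nlinarith [mul_le_mul_of_nonneg_left key hpos.le]
  have hψmono : MonotoneOn ψ (Set.Icc 0 τ) := by
    apply monotoneOn_of_deriv_nonneg (convex_Icc 0 τ)
    · intro t ht
      exact (hψderiv t ht).continuousAt.continuousWithinAt
    · intro t ht
      rw [interior_Icc] at ht
      exact (hψderiv t (Set.mem_Icc_of_Ioo ht)).differentiableAt.differentiableWithinAt
    · intro t ht
      rw [interior_Icc] at ht
      have ht' := Set.mem_Icc_of_Ioo ht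
      rw [(hψderiv t ht').deriv]
      exact hψnonneg t ht'
  have h0 : (0 : ℝ) ∈ Set.Icc (0 : ℝ) τ := Set.left_mem_Icc.2 hτ.le
  have hτm : τ ∈ Set.Icc (0 : ℝ) τ := Set.right_mem_Icc.2 hτ.le
  have hψ0 : ψ 0 = 0 := by simp [hψ_def, hF_def]
  have hfin : φ τ ≤ φ 0 + F τ := by
    have := hψmono h0 hτm hτ.le
    rw [hψ0] at this
    simp only [hψ_def] at this
    linarith
  -- now unfold
  have hexp_pos : (0 : ℝ) < Real.exp (κc * τ) := Real.exp_pos _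
  have hmain : g τ ≤ Real.exp (-κc * τ) * g 0 + Real.exp (-κc * τ) * F τ := by
    have := mul_le_mul_of_nonneg_left hfin (le_of_lt (Real.exp_pos (-κc * τ)))
    have hexpinv : Real.exp (-κc * τ) * Real.exp (κc * τ) = 1 := by
      rw [← Real.exp_add]; ring_nf; exact Real.exp_zero
    calc g τ = (Real.exp (-κc * τ) * Real.exp (κc * τ)) * g τ := by rw [hexpinv]; ring
      _ = Real.exp (-κc * τ) * φ τ := by rw [hφ_def]; ring
      _ ≤ Real.exp (-κc * τ) * (φ 0 + F τ) := by
          exact mul_le_mul_of_nonneg_left hfin (Real.exp_pos _).le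
      _ = Real.exp (-κc * τ) * g 0 + Real.exp (-κc * τ) * F τ := by
          simp only [hφ_def, mul_zero, Real.exp_zero]; ring
  have hFτ : Real.exp (-κc * τ) * F τ = R * ∫ s in (0:ℝ)..τ, Real.exp (-κc * (τ - s)) := by
    rw [hF_def]
    rw [← intervalIntegral.integral_const_mul, ← intervalIntegral.integral_const_mul]
    apply intervalIntegral.integral_congr
    intro s _
    simp only
    rw [show Real.exp (-κc * τ) * (R * Real.exp (κc * s))
        = R * (Real.exp (-κc * τ) * Real.exp (κc * s)) by ring, ← Real.exp_add]
    ring_nf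
  rw [← hFτ]
  exact hmain
end
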